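/- Let B ⊂ ℝ^d be bounded and R₀ > 0, let L₀ satisfy |f(u) − f(v)| ≤ L₀|u−v| and |i(u) − i(v)| ≤ L₀|u−v| for all x ∈ B and u, v ∈ B_{R₀}(x), and let C₁ satisfy |f(x)| ≤ C₁|i(x)| on B. Let (aᵢⱼ)_{i,j=1}^s be the coefficients of an s-stage Runge–Kutta method with A₁ := maxᵢ Σⱼ|aᵢⱼ|, and define H := min{1/(L₀A₁), 1/(2A₁(C₁ + L₀/R₀)R₀), 1/(2L₀A₁(C₁ + L₀/R₀)R₀)}. Then for each x ∈ B, h ∈ [0,H) and u ∈ B_{2R₀}(x) there exist unique vectors k₁, …, k_s ∈ ℝ^d with |kᵢ − f(x)| ≤ L₀|i(x)|/R₀ for each i, satisfying kᵢ = f(u + h Σ_{j=1}^s aᵢⱼ kⱼ) for i = 1, …, s. -/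

import Mathlib

open scoped RealInnerProductSpace

noncomputable section

/-- Membership in the ball `B_R(x) = {z : ‖z − x‖ ≤ ‖i x‖ / R}`. -/
def InBall {d : ℕ} (i : EuclideanSpace ℝ (Fin d) → EuclideanSpace ℝ (Fin d)) (R : ℝ)
    (x z : EuclideanSpace ℝ (Fin d)) : Prop :=
  ‖z - x‖ ≤ ‖i x‖ / R

/-- The consistency and local Lipschitz conditions at the point `x` for an approximation
`g(·,·,·)` of `target` (conditions (11z)/(12z) of the paper, with balls measured via `i`). -/
def ConsistAt {d : ℕ} (i target : EuclideanSpace ℝ (Fin d) → EuclideanSpace ℝ (Fin d))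
    (x : EuclideanSpace ℝ (Fin d)) (R L H : ℝ)
    (g : EuclideanSpace ℝ (Fin d) → EuclideanSpace ℝ (Fin d) → ℝ → EuclideanSpace ℝ (Fin d)) :
    Prop :=
  g x x 0 = target x ∧
    ∀ h : ℝ, 0 ≤ h → h < H →
      (∀ u v w, InBall i R x u → InBall i R x v → InBall i R x w →
        ‖g u v h - g w v h‖ ≤ L * ‖u - w‖ ∧ ‖g u v h - g u w h‖ ≤ L * ‖v - w‖) ∧
      ‖g x x h - g x x 0‖ ≤ L * h * ‖i x‖

/-- The discrete gradient step equation `x' = x + h S̃(x,x',h) ī(x,x')`, where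
`S̃ = (f̃ ĩᵀ − ĩ f̃ᵀ)/(î·ĭ)`, so that
`S̃ ī = ((ĩ·ī) f̃ − (f̃·ī) ĩ)/(î·ĭ)`. -/
def DGEq {d : ℕ}
    (ftil itil ihat ibrev :
      EuclideanSpace ℝ (Fin d) → EuclideanSpace ℝ (Fin d) → ℝ → EuclideanSpace ℝ (Fin d))
    (ibar : EuclideanSpace ℝ (Fin d) → EuclideanSpace ℝ (Fin d) → EuclideanSpace ℝ (Fin d))
    (x : EuclideanSpace ℝ (Fin d)) (h : ℝ) (x' : EuclideanSpace ℝ (Fin d)) : Prop :=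
  x' = x + (h / ⟪ihat x x' h, ibrev x x' h⟫) •
    (⟪itil x x' h, ibar x x'⟫ • ftil x x' h - ⟪ftil x x' h, ibar x x'⟫ • itil x x' h)

/-- Lemma: existence and uniqueness of Runge–Kutta stages. -/
theorem runge_kutta_stages_exist_unique {d s : ℕ}
    (f : EuclideanSpace ℝ (Fin d) → EuclideanSpace ℝ (Fin d))
    (I : EuclideanSpace ℝ (Fin d) → ℝ)
    (i : EuclideanSpace ℝ (Fin d) → EuclideanSpace ℝ (Fin d))
    (hgrad : ∀ x, HasGradientAt I (i x) x)
    (B : Set (EuclideanSpace ℝ (Fin d))) (hB : Bornology.IsBounded B)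
    (R₀ L₀ C₁ : ℝ) (hR₀ : 0 < R₀) (hL₀ : 0 < L₀) (hC₁ : 0 < C₁)
    (hflip : ∀ x ∈ B, ∀ u v : EuclideanSpace ℝ (Fin d),
      InBall i R₀ x u → InBall i R₀ x v → ‖f u - f v‖ ≤ L₀ * ‖u - v‖)
    (hilip : ∀ x ∈ B, ∀ u v : EuclideanSpace ℝ (Fin d),
      InBall i R₀ x u → InBall i R₀ x v → ‖i u - i v‖ ≤ L₀ * ‖u - v‖)
    (hfC : ∀ x ∈ B, ‖f x‖ ≤ C₁ * ‖i x‖)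
    (a : Fin s → Fin s → ℝ)
    (A₁ : ℝ) (hA₁ : A₁ = ⨆ idx : Fin s, ∑ j : Fin s, |a idx j|)
    (H : ℝ) (hH : H = min (1 / (L₀ * A₁))
      (min (1 / (2 * A₁ * (C₁ + L₀ / R₀) * R₀)) (1 / (2 * L₀ * A₁ * (C₁ + L₀ / R₀) * R₀)))) :
    ∀ x ∈ B, ∀ h : ℝ, 0 ≤ h → h < H →
      ∀ u : EuclideanSpace ℝ (Fin d), InBall i (2 * R₀) x u →
        ∃! k : Fin s → EuclideanSpace ℝ (Fin d),
          (∀ idx : Fin s, ‖k idx - f x‖ ≤ L₀ * ‖i x‖ / R₀) ∧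
          ∀ idx : Fin s, k idx = f (u + h • ∑ j : Fin s, a idx j • k j) := by
  intro x hx h h0 hhH u hu
  have hH0 : 0 < H := lt_of_le_of_lt h0 hhH
  have hmin1 : H ≤ 1 / (L₀ * A₁) := hH ▸ min_le_left _ _
  have hmin2 : H ≤ 1 / (2 * A₁ * (C₁ + L₀ / R₀) * R₀) :=
    hH ▸ (min_le_right _ _).trans (min_le_left _ _)
  have h1pos : 0 < 1 / (L₀ * A₁) := lt_of_lt_of_le hH0 hmin1
  have hLA : 0 < L₀ * A₁ := one_div_pos.mp h1pos
  have hA1 : 0 < A₁ := by nlinarith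
  have hD : 0 < C₁ + L₀ / R₀ := by positivity
  have hni : (0:ℝ) ≤ ‖i x‖ := norm_nonneg _
  have hq : h * (L₀ * A₁) < 1 := (lt_div_iff₀ hLA).mp (lt_of_lt_of_le hhH hmin1)
  have hq0 : 0 ≤ h * (L₀ * A₁) := by positivity
  set r : ℝ := L₀ * ‖i x‖ / R₀ with hr
  have hr0 : 0 ≤ r := by positivity
  -- bound on row sums
  have hAsum : ∀ idx : Fin s, ∑ j : Fin s, |a idx j| ≤ A₁ := by
    intro idx
    rw [hA₁]
    exact le_ciSup (f := fun idx : Fin s => ∑ j : Fin s, |a idx j|)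
      (Set.Finite.bddAbove (Set.finite_range _)) idx
  have hxball : InBall i R₀ x x := by
    simp only [InBall, sub_self, norm_zero]
    positivity
  -- generic bound on weighted sums
  have hnormsum : ∀ (v : Fin s → EuclideanSpace ℝ (Fin d)) (Cv : ℝ), 0 ≤ Cv →
      (∀ j, ‖v j‖ ≤ Cv) → ∀ idx : Fin s, ‖∑ j : Fin s, a idx j • v j‖ ≤ A₁ * Cv := by
    intro v Cv hCv hv idx
    calc ‖∑ j : Fin s, a idx j • v j‖ ≤ ∑ j : Fin s, ‖a idx j • v j‖ := norm_sum_le _ _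
      _ = ∑ j : Fin s, |a idx j| * ‖v j‖ := by
          simp [norm_smul, Real.norm_eq_abs]
      _ ≤ ∑ j : Fin s, |a idx j| * Cv :=
          Finset.sum_le_sum fun j _ => mul_le_mul_of_nonneg_left (hv j) (abs_nonneg _)
      _ = (∑ j : Fin s, |a idx j|) * Cv := (Finset.sum_mul _ _ _).symm
      _ ≤ A₁ * Cv := mul_le_mul_of_nonneg_right (hAsum idx) hCv
  -- bound on stage vectors in the ball
  have hkb : ∀ (k : Fin s → EuclideanSpace ℝ (Fin d)), (∀ j, ‖k j - f x‖ ≤ r) →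
      ∀ j, ‖k j‖ ≤ (C₁ + L₀ / R₀) * ‖i x‖ := by
    intro k hk j
    have h1 : k j = (k j - f x) + f x := by abel
    calc ‖k j‖ = ‖(k j - f x) + f x‖ := by rw [← h1]
      _ ≤ ‖k j - f x‖ + ‖f x‖ := norm_add_le _ _
      _ ≤ r + C₁ * ‖i x‖ := add_le_add (hk j) (hfC x hx)
      _ = (C₁ + L₀ / R₀) * ‖i x‖ := by rw [hr]; ring
  -- key smallness estimate
  have hsmall : h * (A₁ * ((C₁ + L₀ / R₀) * ‖i x‖)) ≤ ‖i x‖ / (2 * R₀) := by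
    have hle : h ≤ 1 / (2 * A₁ * (C₁ + L₀ / R₀) * R₀) :=
      le_of_lt (lt_of_lt_of_le hhH hmin2)
    have hpos : (0:ℝ) ≤ A₁ * ((C₁ + L₀ / R₀) * ‖i x‖) := by positivity
    calc h * (A₁ * ((C₁ + L₀ / R₀) * ‖i x‖))
        ≤ (1 / (2 * A₁ * (C₁ + L₀ / R₀) * R₀)) * (A₁ * ((C₁ + L₀ / R₀) * ‖i x‖)) :=
          mul_le_mul_of_nonneg_right hle hpos
      _ = ‖i x‖ / (2 * R₀) := by
          field_simp
  -- the stage map sends the ball into the ball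
  have hmem : ∀ (k : Fin s → EuclideanSpace ℝ (Fin d)), (∀ j, ‖k j - f x‖ ≤ r) →
      ∀ idx : Fin s, InBall i R₀ x (u + h • ∑ j : Fin s, a idx j • k j) := by
    intro k hk idx
    have hS : ‖∑ j : Fin s, a idx j • k j‖ ≤ A₁ * ((C₁ + L₀ / R₀) * ‖i x‖) :=
      hnormsum k _ (by positivity) (hkb k hk) idx
    have hdec : u + h • ∑ j : Fin s, a idx j • k j - x
        = (u - x) + h • ∑ j : Fin s, a idx j • k j := by abel
    show ‖u + h • ∑ j : Fin s, a idx j • k j - x‖ ≤ ‖i x‖ / R₀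
    calc ‖u + h • ∑ j : Fin s, a idx j • k j - x‖
        = ‖(u - x) + h • ∑ j : Fin s, a idx j • k j‖ := by rw [hdec]
      _ ≤ ‖u - x‖ + ‖h • ∑ j : Fin s, a idx j • k j‖ := norm_add_le _ _
      _ = ‖u - x‖ + h * ‖∑ j : Fin s, a idx j • k j‖ := by
          rw [norm_smul, Real.norm_eq_abs, abs_of_nonneg h0]
      _ ≤ ‖i x‖ / (2 * R₀) + h * (A₁ * ((C₁ + L₀ / R₀) * ‖i x‖)) :=
          add_le_add hu (mul_le_mul_of_nonneg_left hS h0)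
      _ ≤ ‖i x‖ / (2 * R₀) + ‖i x‖ / (2 * R₀) := add_le_add_right hsmall _
      _ = ‖i x‖ / R₀ := by ring
  have hball : ∀ (k : Fin s → EuclideanSpace ℝ (Fin d)), (∀ j, ‖k j - f x‖ ≤ r) →
      ∀ idx : Fin s, ‖f (u + h • ∑ j : Fin s, a idx j • k j) - f x‖ ≤ r := by
    intro k hk idx
    calc ‖f (u + h • ∑ j : Fin s, a idx j • k j) - f x‖
        ≤ L₀ * ‖u + h • ∑ j : Fin s, a idx j • k j - x‖ :=
          hflip x hx _ x (hmem k hk idx) hxball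
      _ ≤ L₀ * (‖i x‖ / R₀) := mul_le_mul_of_nonneg_left (hmem k hk idx) (le_of_lt hL₀)
      _ = r := by rw [hr]; ring
  -- contraction estimate
  have hcontr : ∀ (k k' : Fin s → EuclideanSpace ℝ (Fin d)),
      (∀ j, ‖k j - f x‖ ≤ r) → (∀ j, ‖k' j - f x‖ ≤ r) →
      ∀ (M : ℝ), 0 ≤ M → (∀ j, ‖k j - k' j‖ ≤ M) → ∀ idx : Fin s,
      ‖f (u + h • ∑ j : Fin s, a idx j • k j) - f (u + h • ∑ j : Fin s, a idx j • k' j)‖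
        ≤ h * (L₀ * A₁) * M := by
    intro k k' hk hk' M hM0 hM idx
    have hd : (u + h • ∑ j : Fin s, a idx j • k j) - (u + h • ∑ j : Fin s, a idx j • k' j)
        = h • ∑ j : Fin s, a idx j • (k j - k' j) := by
      simp only [Finset.smul_sum, smul_sub, smul_smul, Finset.sum_sub_distrib]
      abel
    have hS : ‖∑ j : Fin s, a idx j • (k j - k' j)‖ ≤ A₁ * M :=
      hnormsum _ M hM0 hM idx
    calc ‖f (u + h • ∑ j : Fin s, a idx j • k j) - f (u + h • ∑ j : Fin s, a idx j • k' j)‖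
        ≤ L₀ * ‖(u + h • ∑ j : Fin s, a idx j • k j) - (u + h • ∑ j : Fin s, a idx j • k' j)‖ :=
          hflip x hx _ _ (hmem k hk idx) (hmem k' hk' idx)
      _ = L₀ * (h * ‖∑ j : Fin s, a idx j • (k j - k' j)‖) := by
          rw [hd, norm_smul, Real.norm_eq_abs, abs_of_nonneg h0]
      _ ≤ L₀ * (h * (A₁ * M)) :=
          mul_le_mul_of_nonneg_left (mul_le_mul_of_nonneg_left hS h0) (le_of_lt hL₀)
      _ = h * (L₀ * A₁) * M := by ring
  -- set up the Banach fixed point argument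
  set K : Set (Fin s → EuclideanSpace ℝ (Fin d)) := {k | ∀ j, ‖k j - f x‖ ≤ r} with hK
  have hKclosed : IsClosed K := by
    have hKi : K = ⋂ j : Fin s, {k : Fin s → EuclideanSpace ℝ (Fin d) | ‖k j - f x‖ ≤ r} := by
      ext k; simp [hK, Set.mem_iInter]
    rw [hKi]
    exact isClosed_iInter fun j =>
      isClosed_le (((continuous_apply j).sub continuous_const).norm) continuous_const
  haveI : CompleteSpace K := hKclosed.completeSpace_coe
  haveI : Nonempty K := ⟨⟨fun _ => f x, fun j => by simpa using hr0⟩⟩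
  set Φ : K → K := fun k =>
    ⟨fun idx => f (u + h • ∑ j : Fin s, a idx j • (k : Fin s → EuclideanSpace ℝ (Fin d)) j),
      fun idx => hball _ k.2 idx⟩ with hΦ
  have hΦlip : LipschitzWith ⟨h * (L₀ * A₁), hq0⟩ Φ := by
    apply LipschitzWith.of_dist_le_mul
    intro k k'
    rw [Subtype.dist_eq, Subtype.dist_eq]
    have hqM : (0:ℝ) ≤ h * (L₀ * A₁) * dist (k : Fin s → EuclideanSpace ℝ (Fin d)) (k' : Fin s → EuclideanSpace ℝ (Fin d)) := by
      have := dist_nonneg (x := (k : Fin s → EuclideanSpace ℝ (Fin d))) (y := (k' : Fin s → EuclideanSpace ℝ (Fin d)))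
      positivity
    refine (dist_pi_le_iff hqM).mpr ?_
    intro idx
    rw [dist_eq_norm]
    have hMj : ∀ j, ‖(k : Fin s → EuclideanSpace ℝ (Fin d)) j - (k' : Fin s → EuclideanSpace ℝ (Fin d)) j‖
        ≤ dist (k : Fin s → EuclideanSpace ℝ (Fin d)) (k' : Fin s → EuclideanSpace ℝ (Fin d)) := by
      intro j
      rw [← dist_eq_norm]
      exact dist_le_pi_dist _ _ j
    exact hcontr _ _ k.2 k'.2 _ (dist_nonneg) hMj idx
  have hcw : ContractingWith ⟨h * (L₀ * A₁), hq0⟩ Φ := ⟨by exact_mod_cast hq, hΦlip⟩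
  set kfix := ContractingWith.fixedPoint Φ hcw with hkfix
  have hfix : Φ kfix = kfix := hcw.fixedPoint_isFixedPt
  refine ⟨(kfix : Fin s → EuclideanSpace ℝ (Fin d)), ⟨kfix.2, ?_⟩, ?_⟩
  · intro idx
    have := congrFun (congrArg Subtype.val hfix) idx
    exact this.symm
  · -- uniqueness
    intro k' hk'
    obtain ⟨hk'ball, hk'eq⟩ := hk'
    set M : ℝ := dist k' (kfix : Fin s → EuclideanSpace ℝ (Fin d)) with hM
    have hfixball : ∀ j, ‖(kfix : Fin s → EuclideanSpace ℝ (Fin d)) j - f x‖ ≤ r := kfix.2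
    have hfixeq : ∀ idx : Fin s, (kfix : Fin s → EuclideanSpace ℝ (Fin d)) idx
        = f (u + h • ∑ j : Fin s, a idx j • (kfix : Fin s → EuclideanSpace ℝ (Fin d)) j) := by
      intro idx
      exact (congrFun (congrArg Subtype.val hfix) idx).symm
    have hMle : M ≤ h * (L₀ * A₁) * M := by
      have hqM : (0:ℝ) ≤ h * (L₀ * A₁) * M := by
        have : (0:ℝ) ≤ M := dist_nonneg
        positivity
      refine (dist_pi_le_iff hqM).mpr ?_
      intro idx
      rw [dist_eq_norm, hk'eq idx, hfixeq idx]
      refine hcontr _ _ hk'ball hfixball M dist_nonneg ?_ idx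
      intro j
      rw [← dist_eq_norm]
      exact dist_le_pi_dist _ _ j
    have hM0 : (0:ℝ) ≤ M := dist_nonneg
    have : M = 0 := by nlinarith
    exact dist_eq_zero.mp this
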